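/- (Pointwise convergence of the covariance to equilibrium via Riemann–Lebesgue) Let m > 0, ω(k) = √(|k|²+m²), and q̂₀ ∈ L¹(ℝ³, ℝ^{8×8}). Then for each fixed z ∈ ℝ³, as t → ∞, ∫ e^{ik·z} cos(2ω(k)t) q̂₀(k) dk → 0 and ∫ e^{ik·z} (sin(2ω(k)t)/ω(k)) q̂₀(k) dk → 0. -/

import Mathlib

open MeasureTheory Complex Filter

local notation "ℝ³" => EuclideanSpace ℝ (Fin 3)

open Real Set Metric
open scoped Topology ENNReal NNReal

lemma RL' (g : ℝ → ℂ) :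
    Tendsto (fun w : ℝ => ∫ v : ℝ, Complex.exp (((v * w : ℝ)) * I) * g v) (cocompact ℝ) (𝓝 0) := by
  have h := Real.tendsto_integral_exp_smul_cocompact (fun v => g v)
  have hπ : (2 * π : ℝ) ≠ 0 := by positivity
  have hne : (-(2*π)⁻¹ : ℝ) ≠ 0 := by simpa using hπ
  have hmap : Tendsto (fun w : ℝ => -w / (2 * π)) (cocompact ℝ) (cocompact ℝ) := by
    have heq : (fun w : ℝ => -w / (2 * π)) = fun w => (Homeomorph.mulLeft₀ (-(2*π)⁻¹ : ℝ) hne) w := by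
      ext w; simp [Homeomorph.coe_mulLeft₀]; ring
    have hmc := (Homeomorph.mulLeft₀ (-(2*π)⁻¹ : ℝ) hne).map_cocompact
    rw [heq, Tendsto, hmc]
  have h2 := h.comp hmap
  convert h2 using 2 with w
  refine integral_congr_ae (Filter.Eventually.of_forall fun v => ?_)
  simp only [Function.comp]
  rw [Circle.smul_def, Real.fourierChar_apply]
  have : 2 * π * -(v * (-w / (2 * π))) = v * w := by field_simp
  rw [this]
  rw [smul_eq_mul]

lemma master_nonneg (ψ : ℝ³ → ℝ) (hψ : Measurable ψ)
    (hnull : ∀ N : Set ℝ, MeasurableSet N → volume N = 0 → volume (ψ ⁻¹' N) = 0)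
    (u : ℝ³ → ℝ) (hm : Measurable u) (h0 : ∀ k, 0 ≤ u k) (hi : Integrable u) :
    Tendsto (fun w : ℝ => ∫ k : ℝ³, Complex.exp (((ψ k * w : ℝ)) * I) * (u k : ℂ))
      (cocompact ℝ) (𝓝 0) := by
  set ν : Measure ℝ³ := volume.withDensity (fun k => ENNReal.ofReal (u k)) with hν
  set μ : Measure ℝ := ν.map ψ with hμ
  have hνfin : IsFiniteMeasure ν := by
    constructor
    rw [hν, withDensity_apply _ MeasurableSet.univ, setLIntegral_univ]
    exact hi.lintegral_lt_top  -- maybe wrong name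
  have hμfin : IsFiniteMeasure μ := by
    constructor
    rw [hμ, Measure.map_apply hψ MeasurableSet.univ]
    simpa using hνfin.measure_univ_lt_top
  have hac : μ ≪ volume := by
    refine Measure.AbsolutelyContinuous.mk fun N hNm hN => ?_
    rw [hμ, Measure.map_apply hψ hNm, hν, withDensity_apply _ (hψ hNm)]
    rw [setLIntegral_measure_zero _ _ (hnull N hNm hN)]
  have key : ∀ w : ℝ, ∫ k : ℝ³, Complex.exp (((ψ k * w : ℝ)) * I) * (u k : ℂ)
      = ∫ s : ℝ, Complex.exp (((s * w : ℝ)) * I) * ((μ.rnDeriv volume s).toReal : ℂ) := by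
    intro w
    have e1 : ∫ s : ℝ, Complex.exp (((s * w : ℝ)) * I) * ((μ.rnDeriv volume s).toReal : ℂ)
        = ∫ s : ℝ, Complex.exp (((s * w : ℝ)) * I) ∂μ := by
      rw [← MeasureTheory.integral_rnDeriv_smul hac (f := fun s => Complex.exp (((s * w : ℝ)) * I))]
      congr 1; ext s
      rw [Complex.real_smul, mul_comm]
    have e2 : ∫ s : ℝ, Complex.exp (((s * w : ℝ)) * I) ∂μ
        = ∫ k : ℝ³, Complex.exp (((ψ k * w : ℝ)) * I) ∂ν := by
      rw [hμ, integral_map hψ.aemeasurable]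
      exact (Complex.continuous_exp.comp (by continuity)).aestronglyMeasurable
    have e3 : ∫ k : ℝ³, Complex.exp (((ψ k * w : ℝ)) * I) ∂ν
        = ∫ k : ℝ³, Complex.exp (((ψ k * w : ℝ)) * I) * (u k : ℂ) := by
      have : ν = volume.withDensity (fun k => ((u k).toNNReal : ℝ≥0∞)) := by
        rw [hν]; congr 1
      rw [this, integral_withDensity_eq_integral_smul (hm.real_toNNReal)]
      congr 1; ext k
      rw [NNReal.smul_def, Real.coe_toNNReal _ (h0 k), Complex.real_smul, mul_comm]
    rw [e1, e2, e3]
  simp_rw [key]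
  exact RL' _

lemma phase_meas (c : ℝ³ → ℝ) (hc : Measurable c) :
    Measurable fun k : ℝ³ => Complex.exp ((c k : ℂ) * I) :=
  Complex.measurable_exp.comp ((Complex.measurable_ofReal.comp hc).mul_const I)

lemma int_phase (c : ℝ³ → ℝ) (hc : Measurable c) (g : ℝ³ → ℂ) (hgm : Measurable g)
    (hgi : Integrable g) :
    Integrable fun k : ℝ³ => Complex.exp ((c k : ℂ) * I) * g k := by
  refine hgi.norm.mono' ((phase_meas c hc).mul hgm).aestronglyMeasurable
    (Filter.Eventually.of_forall fun k => ?_)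
  rw [norm_mul, Complex.norm_exp_ofReal_mul_I, one_mul]

lemma master (ψ : ℝ³ → ℝ) (hψ : Measurable ψ)
    (hnull : ∀ N : Set ℝ, MeasurableSet N → volume N = 0 → volume (ψ ⁻¹' N) = 0)
    (f : ℝ³ → ℂ) (hfm : Measurable f) (hfi : Integrable f) :
    Tendsto (fun w : ℝ => ∫ k : ℝ³, Complex.exp (((ψ k * w : ℝ)) * I) * f k)
      (cocompact ℝ) (𝓝 0) := by
  have hmn := master_nonneg ψ hψ hnull
  set u₁ : ℝ³ → ℝ := fun k => max (f k).re 0 with hu₁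
  set u₂ : ℝ³ → ℝ := fun k => max (-(f k).re) 0 with hu₂
  set u₃ : ℝ³ → ℝ := fun k => max (f k).im 0 with hu₃
  set u₄ : ℝ³ → ℝ := fun k => max (-(f k).im) 0 with hu₄
  have hm₁ : Measurable u₁ := (Complex.measurable_re.comp hfm).max measurable_const
  have hm₂ : Measurable u₂ := (Complex.measurable_re.comp hfm).neg.max measurable_const
  have hm₃ : Measurable u₃ := (Complex.measurable_im.comp hfm).max measurable_const
  have hm₄ : Measurable u₄ := (Complex.measurable_im.comp hfm).neg.max measurable_const
  have hb : ∀ (v : ℝ³ → ℝ), Measurable v → (∀ k, |v k| ≤ ‖f k‖) → Integrable v := fun v hv h =>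
    hfi.norm.mono' hv.aestronglyMeasurable (Filter.Eventually.of_forall fun k => by
      simpa using h k)
  have habs : ∀ (a b : ℝ), |a| ≤ b → |max a 0| ≤ b := fun a b h => by
    rw [_root_.abs_of_nonneg (le_max_right a 0)]
    exact le_trans (max_le (le_abs_self a) (abs_nonneg a)) h
  have hi₁ : Integrable u₁ := hb u₁ hm₁ fun k =>
    habs _ _ (by exact Complex.abs_re_le_norm (f k))
  have hi₂ : Integrable u₂ := hb u₂ hm₂ fun k =>
    habs _ _ (by rw [abs_neg]; exact Complex.abs_re_le_norm (f k))
  have hi₃ : Integrable u₃ := hb u₃ hm₃ fun k =>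
    habs _ _ (by exact Complex.abs_im_le_norm (f k))
  have hi₄ : Integrable u₄ := hb u₄ hm₄ fun k =>
    habs _ _ (by rw [abs_neg]; exact Complex.abs_im_le_norm (f k))
  have h0₁ : ∀ k, 0 ≤ u₁ k := fun k => le_max_right _ _
  have h0₂ : ∀ k, 0 ≤ u₂ k := fun k => le_max_right _ _
  have h0₃ : ∀ k, 0 ≤ u₃ k := fun k => le_max_right _ _
  have h0₄ : ∀ k, 0 ≤ u₄ k := fun k => le_max_right _ _
  have hdecomp : ∀ k, f k = ((u₁ k : ℂ) - u₂ k) + ((u₃ k : ℂ) - u₄ k) * I := by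
    intro k
    have h1 : (u₁ k : ℝ) - u₂ k = (f k).re := max_zero_sub_max_neg_zero_eq_self _
    have h2 : (u₃ k : ℝ) - u₄ k = (f k).im := max_zero_sub_max_neg_zero_eq_self _
    rw [show ((u₁ k : ℂ) - u₂ k) = ((u₁ k - u₂ k : ℝ) : ℂ) by push_cast; ring,
        show ((u₃ k : ℂ) - u₄ k) = ((u₃ k - u₄ k : ℝ) : ℂ) by push_cast; ring, h1, h2]
    exact (Complex.re_add_im (f k)).symm
  have hsplit : ∀ w : ℝ, ∫ k : ℝ³, Complex.exp (((ψ k * w : ℝ)) * I) * f k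
      = ((∫ k : ℝ³, Complex.exp (((ψ k * w : ℝ)) * I) * (u₁ k : ℂ))
        - ∫ k : ℝ³, Complex.exp (((ψ k * w : ℝ)) * I) * (u₂ k : ℂ))
        + ((∫ k : ℝ³, Complex.exp (((ψ k * w : ℝ)) * I) * (u₃ k : ℂ))
          - ∫ k : ℝ³, Complex.exp (((ψ k * w : ℝ)) * I) * (u₄ k : ℂ)) * I := by
    intro w
    have hcw : Measurable fun k : ℝ³ => ψ k * w := hψ.mul_const w
    have J : ∀ (v : ℝ³ → ℝ), Measurable v → Integrable v →
        Integrable fun k : ℝ³ => Complex.exp (((ψ k * w : ℝ)) * I) * (v k : ℂ) :=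
      fun v hv hvi => int_phase _ hcw _ (Complex.measurable_ofReal.comp hv) hvi.ofReal
    calc ∫ k : ℝ³, Complex.exp (((ψ k * w : ℝ)) * I) * f k
        = ∫ k : ℝ³, (Complex.exp (((ψ k * w : ℝ)) * I) * (u₁ k : ℂ)
            - Complex.exp (((ψ k * w : ℝ)) * I) * (u₂ k : ℂ))
          + (Complex.exp (((ψ k * w : ℝ)) * I) * (u₃ k : ℂ) * I
            - Complex.exp (((ψ k * w : ℝ)) * I) * (u₄ k : ℂ) * I) := by
          refine integral_congr_ae (Filter.Eventually.of_forall fun k => ?_)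
          simp only [hdecomp k]; ring
      _ = _ := by
          have hI1 : Integrable (fun k : ℝ³ => Complex.exp (((ψ k * w : ℝ)) * I) * (u₁ k : ℂ)
              - Complex.exp (((ψ k * w : ℝ)) * I) * (u₂ k : ℂ)) volume :=
            (J u₁ hm₁ hi₁).sub (J u₂ hm₂ hi₂)
          have hI2 : Integrable (fun k : ℝ³ => Complex.exp (((ψ k * w : ℝ)) * I) * (u₃ k : ℂ) * I
              - Complex.exp (((ψ k * w : ℝ)) * I) * (u₄ k : ℂ) * I) volume :=
            ((J u₃ hm₃ hi₃).mul_const I).sub ((J u₄ hm₄ hi₄).mul_const I)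
          rw [integral_add hI1 hI2,
            integral_sub (J u₁ hm₁ hi₁) (J u₂ hm₂ hi₂),
            integral_sub ((J u₃ hm₃ hi₃).mul_const I) ((J u₄ hm₄ hi₄).mul_const I),
            integral_mul_const, integral_mul_const]
          ring
  simp_rw [hsplit]
  have := ((hmn u₁ hm₁ h0₁ hi₁).sub (hmn u₂ hm₂ h0₂ hi₂)).add
    (((hmn u₃ hm₃ h0₃ hi₃).sub (hmn u₄ hm₄ h0₄ hi₄)).mul_const I)
  simpa using this

lemma norm_preimage_null (A : Set ℝ) (hAm : MeasurableSet A) (hA0 : A ⊆ Set.Ioi 0)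
    (hA : volume A = 0) : volume {k : ℝ³ | ‖k‖ ∈ A} = 0 := by
  set E := ℝ³
  set μ : Measure ℝ³ := volume with hμdef
  have hmp := MeasureTheory.Measure.measurePreserving_homeomorphUnitSphereProd μ
  set A' : Set (Set.Ioi (0:ℝ)) := {r : Set.Ioi (0:ℝ) | (r : ℝ) ∈ A} with hA'
  have hA'm : MeasurableSet A' := measurable_subtype_coe hAm
  have hSm : MeasurableSet (Set.univ ×ˢ A' : Set (sphere (0:ℝ³) 1 × Set.Ioi (0:ℝ))) :=
    MeasurableSet.univ.prod hA'm
  have hpre : (Subtype.val ⁻¹' {k : ℝ³ | ‖k‖ ∈ A} : Set ({(0:ℝ³)}ᶜ : Set ℝ³))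
      = (homeomorphUnitSphereProd ℝ³) ⁻¹' (Set.univ ×ˢ A') := by
    ext x
    simp [homeomorphUnitSphereProd, A']
  have hemb : MeasurableEmbedding (Subtype.val : ({(0:ℝ³)}ᶜ : Set ℝ³) → ℝ³) :=
    MeasurableEmbedding.subtype_coe (measurableSet_singleton (0:ℝ³)).compl
  have h1 : μ {k : ℝ³ | ‖k‖ ∈ A} = (μ.comap (Subtype.val : ({(0:ℝ³)}ᶜ : Set ℝ³) → ℝ³)) ((Subtype.val : ({(0:ℝ³)}ᶜ : Set ℝ³) → ℝ³) ⁻¹' {k : ℝ³ | ‖k‖ ∈ A}) := by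
    rw [hemb.comap_apply, Set.image_preimage_eq_inter_range, Subtype.range_coe]
    rw [Set.inter_eq_self_of_subset_left]
    intro k hk
    simp only [Set.mem_compl_iff, Set.mem_singleton_iff]
    intro h0
    have := hA0 hk
    rw [h0] at this
    simp at this
  have h2 : (μ.comap (Subtype.val : ({(0:ℝ³)}ᶜ : Set ℝ³) → ℝ³)) ((homeomorphUnitSphereProd ℝ³) ⁻¹' (Set.univ ×ˢ A'))
      = (μ.toSphere.prod (Measure.volumeIoiPow (Module.finrank ℝ ℝ³ - 1))) (Set.univ ×ˢ A') :=
    hmp.measure_preimage hSm.nullMeasurableSet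
  have h3 : (Measure.volumeIoiPow (Module.finrank ℝ ℝ³ - 1)) A' = 0 := by
    rw [Measure.volumeIoiPow, withDensity_apply _ hA'm]
    have : (Measure.comap Subtype.val (volume : Measure ℝ)) A' = 0 := by
      rw [(MeasurableEmbedding.subtype_coe measurableSet_Ioi).comap_apply]
      refine measure_mono_null ?_ hA
      rintro r ⟨x, hx, rfl⟩
      exact hx
    exact setLIntegral_measure_zero _ _ this
  rw [h1, hpre, h2, Measure.prod_prod, h3, mul_zero]

lemma sqle_aux {x y : ℝ} (hx : 0 ≤ x) (hxy : x^2 ≤ y) : x ≤ Real.sqrt y := by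
  rw [show x = Real.sqrt (x^2) from (Real.sqrt_sq hx).symm]
  exact Real.sqrt_le_sqrt hxy

lemma le_of_sq_le {x y : ℝ} (hx : 0 ≤ x) (hy : 0 ≤ y) (h : x^2 ≤ y^2) : x ≤ y := by
  rw [show x = Real.sqrt (x^2) from (Real.sqrt_sq hx).symm,
      show y = Real.sqrt (y^2) from (Real.sqrt_sq hy).symm]
  exact Real.sqrt_le_sqrt h

-- For a > 0 and N null, the set {r ≥ a : 2√(r²+m²) ∈ N} is null.
lemma slice_null (m a : ℝ) (hm : 0 < m) (ha : 0 < a) (N : Set ℝ) (hN : volume N = 0) :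
    volume {r : ℝ | a ≤ r ∧ 2 * Real.sqrt (r^2 + m^2) ∈ N} = 0 := by
  set C : ℝ := Real.sqrt (a^2 + m^2) with hC
  have hC2 : C^2 = a^2 + m^2 := Real.sq_sqrt (by positivity)
  have hCa : a ≤ C := sqle_aux ha.le (by nlinarith)
  have hCpos : 0 < C := lt_of_lt_of_le ha hCa
  set c : ℝ := 2 * C with hc
  have hcpos : 0 < c := by positivity
  set g : ℝ → ℝ := fun s => Real.sqrt ((s/2)^2 - m^2) with hg
  set K : ℝ≥0 := (C / (2*a)).toNNReal with hK
  have key : ∀ s ∈ Set.Ici c, a ≤ g s ∧ (g s)^2 = (s/2)^2 - m^2 ∧ s * a ≤ 2 * C * g s := by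
    intro s hs
    have hs' : c ≤ s := hs
    have hspos : 0 < s := lt_of_lt_of_le hcpos hs'
    have hs2 : c^2 ≤ s^2 := by nlinarith
    have hnn : a^2 ≤ (s/2)^2 - m^2 := by nlinarith
    have hga : a ≤ g s := sqle_aux ha.le hnn
    have hgpos : 0 < g s := lt_of_lt_of_le ha hga
    have hg2 : (g s)^2 = (s/2)^2 - m^2 := Real.sq_sqrt (by nlinarith)
    refine ⟨hga, hg2, ?_⟩
    refine le_of_sq_le (by positivity) (by positivity) ?_
    have : (2*C*g s)^2 = 4*C^2*(g s)^2 := by ring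
    rw [this, hg2, hC2]
    nlinarith
  have hlip : LipschitzOnWith K g (Set.Ici c) := by
    refine LipschitzOnWith.of_dist_le_mul fun s₁ h₁ s₂ h₂ => ?_
    obtain ⟨ha1, hq1, hl1⟩ := key s₁ h₁
    obtain ⟨ha2, hq2, hl2⟩ := key s₂ h₂
    have hgpos1 : 0 < g s₁ := lt_of_lt_of_le ha ha1
    have hgpos2 : 0 < g s₂ := lt_of_lt_of_le ha ha2
    have hs1 : 0 < s₁ := lt_of_lt_of_le hcpos h₁
    have hs2 : 0 < s₂ := lt_of_lt_of_le hcpos h₂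
    rw [Real.dist_eq, Real.dist_eq, hK, Real.coe_toNNReal _ (by positivity)]
    have hsum : 0 < g s₁ + g s₂ := by positivity
    have habs : |g s₁ - g s₂| * (g s₁ + g s₂) = |s₁ - s₂| * (s₁ + s₂) / 4 := by
      rw [← abs_of_pos hsum, ← abs_mul]
      have h5 : (g s₁ - g s₂) * (g s₁ + g s₂) = (s₁ - s₂) * (s₁ + s₂) / 4 := by nlinarith [hq1, hq2]
      rw [h5, abs_div, abs_of_pos (by norm_num : (0:ℝ) < 4), abs_mul,
        abs_of_pos (by positivity : (0:ℝ) < s₁ + s₂)]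
    have hbound : (s₁ + s₂) * a ≤ 2 * C * (g s₁ + g s₂) := by nlinarith
    have h4 : |g s₁ - g s₂| * ((g s₁ + g s₂) * a) ≤ (C / (2*a) * |s₁ - s₂|) * ((g s₁ + g s₂) * a) := by
      have e1 : |g s₁ - g s₂| * ((g s₁ + g s₂) * a) = |s₁ - s₂| * ((s₁ + s₂) * a) / 4 := by
        rw [← mul_assoc, habs]; ring
      rw [e1]
      have e2 : (C / (2*a) * |s₁ - s₂|) * ((g s₁ + g s₂) * a) = |s₁ - s₂| * (2 * C * (g s₁ + g s₂)) / 4 := by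
        field_simp; ring
      rw [e2]
      exact div_le_div_of_nonneg_right (mul_le_mul_of_nonneg_left hbound (abs_nonneg _)) (by norm_num)
    have hpos : 0 < (g s₁ + g s₂) * a := by positivity
    exact le_of_mul_le_mul_right h4 hpos
  have hsub : {r : ℝ | a ≤ r ∧ 2 * Real.sqrt (r^2 + m^2) ∈ N} ⊆ g '' (N ∩ Set.Ici c) := by
    rintro r ⟨har, hrN⟩
    refine ⟨2 * Real.sqrt (r^2 + m^2), ⟨hrN, ?_⟩, ?_⟩
    · simp only [Set.mem_Ici, hc]
      have h6 : a^2 + m^2 ≤ r^2 + m^2 := by nlinarith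
      have := Real.sqrt_le_sqrt h6
      rw [hC]; linarith
    · rw [hg]
      simp only
      rw [show 2 * Real.sqrt (r ^ 2 + m ^ 2) / 2 = Real.sqrt (r^2+m^2) by ring,
        Real.sq_sqrt (by positivity), show r^2 + m^2 - m^2 = r^2 by ring,
        Real.sqrt_sq (by linarith)]
  refine measure_mono_null hsub ?_
  have hlip' : LipschitzOnWith K g (N ∩ Set.Ici c) := hlip.mono Set.inter_subset_right
  have him := hlip'.hausdorffMeasure_image_le (zero_le_one (α := ℝ))
  have hz : μH[1] (N ∩ Set.Ici c) = 0 := by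
    rw [MeasureTheory.hausdorffMeasure_real]
    exact measure_mono_null Set.inter_subset_left hN
  rw [← MeasureTheory.hausdorffMeasure_real]
  refine le_antisymm (le_trans him ?_) zero_le
  rw [hz, mul_zero]

lemma psi_null (m : ℝ) (hm : 0 < m) (N : Set ℝ) (hNm : MeasurableSet N) (hN : volume N = 0) :
    volume ((fun k : ℝ³ => 2 * Real.sqrt (‖k‖^2 + m^2)) ⁻¹' N) = 0 := by
  set A : ℕ → Set ℝ := fun n => {r : ℝ | 1/(n+1 : ℝ) ≤ r ∧ 2 * Real.sqrt (r^2 + m^2) ∈ N} with hA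
  have hcont : Continuous fun r : ℝ => 2 * Real.sqrt (r^2 + m^2) := by continuity
  have hAm : ∀ n, MeasurableSet (A n) := fun n =>
    (measurableSet_Ici.preimage measurable_id).inter (hcont.measurable hNm)
  have hA0 : ∀ n, A n ⊆ Set.Ioi 0 := fun n r hr =>
    lt_of_lt_of_le (by positivity) hr.1
  have hAnull : ∀ n, volume (A n) = 0 := fun n => slice_null m _ hm (by positivity) N hN
  have hsub : (fun k : ℝ³ => 2 * Real.sqrt (‖k‖^2 + m^2)) ⁻¹' N
      ⊆ {(0 : ℝ³)} ∪ ⋃ n : ℕ, {k : ℝ³ | ‖k‖ ∈ A n} := by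
    intro k hk
    rcases eq_or_ne k 0 with rfl | hk0
    · exact Or.inl rfl
    · refine Or.inr ?_
      have hpos : 0 < ‖k‖ := norm_pos_iff.2 hk0
      obtain ⟨n, hn⟩ := exists_nat_one_div_lt hpos
      exact Set.mem_iUnion.2 ⟨n, ⟨hn.le, hk⟩⟩
  refine measure_mono_null hsub (measure_union_null (measure_singleton _) ?_)
  exact measure_iUnion_null fun n => norm_preimage_null (A n) (hAm n) (hA0 n) (hAnull n)

/-- Pointwise convergence of the covariance to equilibrium: the oscillatory integrals
    ∫ e^{ik·z} cos(2ω(k)t) q̂₀(k) dk and ∫ e^{ik·z} sin(2ω(k)t)/ω(k) q̂₀(k) dk vanish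
    as t → ∞, for q̂₀ ∈ L¹ and ω(k) = √(|k|²+m²), m > 0. -/
theorem oscillatory_integrals_vanish (m : ℝ) (hm : 0 < m)
    (q0 : ℝ³ → Matrix (Fin 8) (Fin 8) ℝ)
    (hqmeas : ∀ i j : Fin 8, Measurable fun k => q0 k i j)
    (hqL1 : ∀ i j : Fin 8, Integrable fun k : ℝ³ => q0 k i j) :
    ∀ (z : ℝ³) (i j : Fin 8),
      Tendsto (fun t : ℝ =>
          ∫ k : ℝ³, Complex.exp (I * ((inner ℝ k z : ℝ) : ℂ)) *
            (Real.cos (2 * Real.sqrt (‖k‖ ^ 2 + m ^ 2) * t) : ℝ) * (q0 k i j : ℝ))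
        atTop (nhds 0) ∧
      Tendsto (fun t : ℝ =>
          ∫ k : ℝ³, Complex.exp (I * ((inner ℝ k z : ℝ) : ℂ)) *
            ((Real.sin (2 * Real.sqrt (‖k‖ ^ 2 + m ^ 2) * t) /
              Real.sqrt (‖k‖ ^ 2 + m ^ 2) : ℝ)) * (q0 k i j : ℝ))
        atTop (nhds 0) := by

  intro z i j
  set ω : ℝ³ → ℝ := fun k => Real.sqrt (‖k‖^2 + m^2) with hω
  set ψ : ℝ³ → ℝ := fun k => 2 * ω k with hψ
  have hωcont : Continuous ω := by rw [hω]; continuity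
  have hψm : Measurable ψ := (continuous_const.mul hωcont).measurable
  have hωm : ∀ k, m ≤ ω k := fun k => by
    rw [hω]
    calc m = Real.sqrt (m^2) := (Real.sqrt_sq hm.le).symm
    _ ≤ _ := Real.sqrt_le_sqrt (by nlinarith [sq_nonneg ‖k‖])
  have hωpos : ∀ k, 0 < ω k := fun k => lt_of_lt_of_le hm (hωm k)
  have hnull : ∀ N : Set ℝ, MeasurableSet N → volume N = 0 → volume (ψ ⁻¹' N) = 0 :=
    fun N h1 h2 => psi_null m hm N h1 h2
  have hinner : Measurable fun k : ℝ³ => (inner ℝ k z : ℝ) :=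
    (continuous_id.inner continuous_const).measurable
  -- the common factor
  set f₁ : ℝ³ → ℂ := fun k => Complex.exp (I * ((inner ℝ k z : ℝ) : ℂ)) * (q0 k i j : ℂ) with hf₁
  have hf₁m : Measurable f₁ := by
    apply Measurable.mul
    · exact Complex.measurable_exp.comp ((Complex.measurable_ofReal.comp hinner).const_mul I)
    · exact Complex.measurable_ofReal.comp (hqmeas i j)
  have hnorm1 : ∀ k, ‖f₁ k‖ = ‖q0 k i j‖ := fun k => by
    rw [hf₁, norm_mul, mul_comm I,
      Complex.norm_exp_ofReal_mul_I, one_mul, Complex.norm_real, Real.norm_eq_abs]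
  have hf₁i : Integrable f₁ := by
    refine (hqL1 i j).norm.mono' hf₁m.aestronglyMeasurable
      (Filter.Eventually.of_forall fun k => ?_)
    exact (hnorm1 k).le
  set f₂ : ℝ³ → ℂ := fun k => f₁ k / (2 * I * (ω k : ℂ)) with hf₂
  have hf₂m : Measurable f₂ := by
    apply hf₁m.div
    exact (measurable_const.mul (Complex.measurable_ofReal.comp hωcont.measurable))
  have hden : ∀ k, ‖(2 * I * (ω k : ℂ))‖ = 2 * ω k := fun k => by
    rw [norm_mul, norm_mul,
      Complex.norm_I, Complex.norm_two, Complex.norm_real, Real.norm_eq_abs, mul_one, abs_of_pos (hωpos k)]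
  have hf₂i : Integrable f₂ := by
    refine (((hqL1 i j).norm.const_mul (1/(2*m)))).mono' hf₂m.aestronglyMeasurable
      (Filter.Eventually.of_forall fun k => ?_)
    rw [hf₂]
    simp only [norm_div]
    rw [hnorm1 k, hden k]
    rw [div_le_iff₀ (by positivity)]
    have h1 : (1:ℝ)/(2*m) * ‖q0 k i j‖ * (2 * ω k) = ‖q0 k i j‖ * (ω k / m) := by
      field_simp
    rw [h1]
    have h2 : (1:ℝ) ≤ ω k / m := (one_le_div hm).2 (hωm k)
    nlinarith [norm_nonneg (q0 k i j)]
  -- limits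
  have hTpos : Tendsto (fun t : ℝ => t) atTop (cocompact ℝ) :=
    tendsto_id.mono_right _root_.atTop_le_cocompact
  have hTneg : Tendsto (fun t : ℝ => -t) atTop (cocompact ℝ) :=
    tendsto_neg_atTop_atBot.mono_right _root_.atBot_le_cocompact
  have h1 := master ψ hψm hnull f₁ hf₁m hf₁i
  have h2 := master ψ hψm hnull f₂ hf₂m hf₂i
  constructor
  · have hEq : ∀ t : ℝ, (∫ k : ℝ³, Complex.exp (I * ((inner ℝ k z : ℝ) : ℂ)) *
        (Real.cos (2 * Real.sqrt (‖k‖ ^ 2 + m ^ 2) * t) : ℝ) * (q0 k i j : ℝ))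
        = ((∫ k : ℝ³, Complex.exp (((ψ k * t : ℝ)) * I) * f₁ k)
          + ∫ k : ℝ³, Complex.exp (((ψ k * (-t) : ℝ)) * I) * f₁ k) / 2 := by
      intro t
      rw [← integral_add (int_phase _ (hψm.mul_const t) _ hf₁m hf₁i)
          (int_phase _ (hψm.mul_const (-t)) _ hf₁m hf₁i), ← integral_div]
      refine integral_congr_ae (Filter.Eventually.of_forall fun k => ?_)
      have hcos : (Real.cos (ψ k * t) : ℂ) = Complex.cos ((ψ k * t : ℝ) : ℂ) :=
        Complex.ofReal_cos _
      have h2c := Complex.two_cos (x := ((ψ k * t : ℝ) : ℂ))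
      have hcast : ((ψ k * (-t) : ℝ) : ℂ) = -((ψ k * t : ℝ) : ℂ) := by push_cast; ring
      simp only [hψ, hω] at hcos h2c hcast ⊢
      rw [show Complex.exp (I * ((inner ℝ k z : ℝ) : ℂ)) *
          (Real.cos (2 * Real.sqrt (‖k‖ ^ 2 + m ^ 2) * t) : ℝ) * (q0 k i j : ℝ)
          = (Real.cos (2 * Real.sqrt (‖k‖ ^ 2 + m ^ 2) * t) : ℂ) * f₁ k by rw [hf₁]; ring]
      rw [hcos, hcast]
      have : Complex.cos ((2 * Real.sqrt (‖k‖ ^ 2 + m ^ 2) * t : ℝ) : ℂ)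
          = (Complex.exp (((2 * Real.sqrt (‖k‖ ^ 2 + m ^ 2) * t : ℝ) : ℂ) * I)
            + Complex.exp (-((2 * Real.sqrt (‖k‖ ^ 2 + m ^ 2) * t : ℝ) : ℂ) * I)) / 2 := by
        rw [eq_div_iff (two_ne_zero), mul_comm _ (2:ℂ), Complex.two_cos]
      rw [this]
      ring
    simp only [hEq]
    have := ((h1.comp hTpos).add (h1.comp hTneg)).div_const (2:ℂ)
    simpa using this
  · have hEq : ∀ t : ℝ, (∫ k : ℝ³, Complex.exp (I * ((inner ℝ k z : ℝ) : ℂ)) *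
        ((Real.sin (2 * Real.sqrt (‖k‖ ^ 2 + m ^ 2) * t) /
          Real.sqrt (‖k‖ ^ 2 + m ^ 2) : ℝ)) * (q0 k i j : ℝ))
        = (∫ k : ℝ³, Complex.exp (((ψ k * t : ℝ)) * I) * f₂ k)
          - ∫ k : ℝ³, Complex.exp (((ψ k * (-t) : ℝ)) * I) * f₂ k := by
      intro t
      rw [← integral_sub (int_phase _ (hψm.mul_const t) _ hf₂m hf₂i)
          (int_phase _ (hψm.mul_const (-t)) _ hf₂m hf₂i)]
      refine integral_congr_ae (Filter.Eventually.of_forall fun k => ?_)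
      have hωne : ((ω k : ℂ)) ≠ 0 := by
        simp only [ne_eq, Complex.ofReal_eq_zero]
        exact (hωpos k).ne'
      have hsin : Complex.sin ((ψ k * t : ℝ) : ℂ)
          = (Complex.exp (-((ψ k * t : ℝ) : ℂ) * I) - Complex.exp (((ψ k * t : ℝ) : ℂ) * I)) * I / 2 := by
        rw [eq_div_iff (two_ne_zero), mul_comm _ (2:ℂ), Complex.two_sin]
      have hcast : ((ψ k * (-t) : ℝ) : ℂ) = -((ψ k * t : ℝ) : ℂ) := by push_cast; ring
      simp only [hψ, hω] at hsin hcast ⊢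
      rw [show Complex.exp (I * ((inner ℝ k z : ℝ) : ℂ)) *
          ((Real.sin (2 * Real.sqrt (‖k‖ ^ 2 + m ^ 2) * t) /
            Real.sqrt (‖k‖ ^ 2 + m ^ 2) : ℝ)) * (q0 k i j : ℝ)
          = (Real.sin (2 * Real.sqrt (‖k‖ ^ 2 + m ^ 2) * t) : ℂ)
            / (Real.sqrt (‖k‖ ^ 2 + m ^ 2) : ℂ) * f₁ k by
        rw [hf₁]; push_cast; ring]
      rw [hf₂, hcast]
      rw [show ((Real.sin (2 * Real.sqrt (‖k‖ ^ 2 + m ^ 2) * t) : ℝ) : ℂ)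
          = Complex.sin ((2 * Real.sqrt (‖k‖ ^ 2 + m ^ 2) * t : ℝ) : ℂ) from
          Complex.ofReal_sin _]
      rw [hsin]
      simp only [hf₁, hω, hψ]
      field_simp
      ring_nf
      simp only [Complex.I_sq]
      ring
    simp only [hEq]
    have := (h2.comp hTpos).sub (h2.comp hTneg)
    simpa using this
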